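/- With notation as in the ρ = 1 case of Theorem 1 (p = q, barriers (p₀,q₀,r₀,s₀) at multiples of N, start at i₀ with 0 ≤ i₀ < N), the sequence x_{kN} = ((i₀q₀ξ₂/p₀)+N-i₀)ξ₁^k/D for k ≤ 0 and x_{kN} = ((i₀q₀ξ₁/p₀)+N-i₀)ξ₂^k/D for k ≥ 1 is the unique bounded solution of the difference equation q₀x_{(k+1)N} - (p₀+q₀+Ns₀)x_{kN} + p₀x_{(k-1)N} = (i₀-N)δ(k,0) - i₀δ(k,1) over k ∈ ℤ. -/

import Mathlib

/-- A bounded solution of the homogeneous recurrence is zero. -/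
lemma stmt7_aux (q₀ p₀ ξ₁ ξ₂ : ℝ) (A : ℝ)
    (hq : 0 < q₀) (hp : 0 < p₀) (hξ₁1 : 1 < ξ₁) (hξ₂0 : 0 < ξ₂) (hξ₂1 : ξ₂ < 1)
    (hA : A = q₀ * (ξ₁ + ξ₂)) (hP : p₀ = q₀ * ξ₁ * ξ₂)
    (z : ℤ → ℝ) (hz : ∀ k : ℤ, q₀ * z (k + 1) - A * z k + p₀ * z (k - 1) = 0)
    (M : ℝ) (hM : ∀ k : ℤ, |z k| ≤ M) : ∀ k : ℤ, z k = 0 := by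
  have hξ₁0 : (0:ℝ) < ξ₁ := lt_trans one_pos hξ₁1
  have h1ne : ξ₁ ≠ 0 := ne_of_gt hξ₁0
  have h2ne : ξ₂ ≠ 0 := ne_of_gt hξ₂0
  have hsub : ξ₁ - ξ₂ ≠ 0 := by nlinarith
  set a : ℝ := (z 1 - ξ₂ * z 0) / (ξ₁ - ξ₂) with ha
  set b : ℝ := (ξ₁ * z 0 - z 1) / (ξ₁ - ξ₂) with hb
  have key : ∀ k : ℤ, z k = a * ξ₁ ^ k + b * ξ₂ ^ k ∧
      z (k + 1) = a * ξ₁ ^ (k + 1) + b * ξ₂ ^ (k + 1) := by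
    intro k
    induction k using Int.induction_on with
    | zero =>
      constructor
      · simp only [zpow_zero, mul_one]
        rw [ha, hb]; field_simp; ring
      · simp only [zero_add, zpow_one]
        rw [ha, hb]; field_simp; ring
    | succ i ih =>
      refine ⟨ih.2, ?_⟩
      have hk := hz ((i : ℤ) + 1)
      rw [show ((i:ℤ) + 1 - 1) = (i:ℤ) by ring] at hk
      rw [ih.1, ih.2] at hk
      rw [zpow_add_one₀ h1ne ((i:ℤ)+1), zpow_add_one₀ h2ne ((i:ℤ)+1)]
      rw [zpow_add_one₀ h1ne (i:ℤ), zpow_add_one₀ h2ne (i:ℤ)] at hk ⊢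
      rw [hA, hP] at hk
      have hq' : q₀ ≠ 0 := ne_of_gt hq
      refine mul_left_cancel₀ hq' ?_
      linear_combination hk
    | pred i ih =>
      have hk := hz (-(i:ℤ))
      rw [ih.1, ih.2] at hk
      constructor
      · have estep : ∀ (t : ℝ), t ≠ 0 → ∀ m : ℤ, t ^ m = t ^ (m - 1) * t := by
          intro t ht m
          conv_lhs => rw [show m = (m-1)+1 by ring]
          rw [zpow_add_one₀ ht]
        rw [zpow_add_one₀ h1ne (-(i:ℤ)), zpow_add_one₀ h2ne (-(i:ℤ)),
          estep ξ₁ h1ne (-(i:ℤ)), estep ξ₂ h2ne (-(i:ℤ)), hA, hP] at hk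
        have hqne : q₀ * ξ₁ * ξ₂ ≠ 0 := by positivity
        refine mul_left_cancel₀ hqne ?_
        linear_combination hk
      · rw [show (-(i:ℤ) - 1 + 1) = -(i:ℤ) by ring]
        exact ih.1
  have hM0 : 0 ≤ M := le_trans (abs_nonneg _) (hM 0)
  have ha0 : a = 0 := by
    by_contra h
    have habs : 0 < |a| := abs_pos.mpr h
    obtain ⟨n, hn⟩ := pow_unbounded_of_one_lt ((M + |b|) / |a|) hξ₁1
    have hzn := (key (n : ℤ)).1
    have hzp : ξ₁ ^ (n:ℤ) = ξ₁ ^ n := zpow_natCast ξ₁ n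
    have hzp2 : ξ₂ ^ (n:ℤ) = ξ₂ ^ n := zpow_natCast ξ₂ n
    rw [hzp, hzp2] at hzn
    have h2 : |b * ξ₂ ^ n| ≤ |b| := by
      rw [abs_mul, abs_of_pos (pow_pos hξ₂0 n)]
      nlinarith [abs_nonneg b, pow_le_one₀ (le_of_lt hξ₂0) (le_of_lt hξ₂1) (n := n)]
    have h3 : |a| * ξ₁ ^ n ≤ M + |b| := by
      have := hM (n : ℤ)
      rw [hzn] at this
      have h4 : |a * ξ₁ ^ n| - |b * ξ₂ ^ n| ≤ |a * ξ₁ ^ n + b * ξ₂ ^ n| := by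
        have := abs_sub (a * ξ₁ ^ n + b * ξ₂ ^ n) (b * ξ₂ ^ n)
        simp only [add_sub_cancel_right] at this
        linarith
      rw [abs_mul, abs_of_pos (pow_pos hξ₁0 n)] at h4
      linarith
    rw [div_lt_iff₀ habs] at hn
    nlinarith
  have hb0 : b = 0 := by
    by_contra h
    have habs : 0 < |b| := abs_pos.mpr h
    have hinv : 1 < ξ₂⁻¹ := (one_lt_inv₀ hξ₂0).mpr hξ₂1
    obtain ⟨n, hn⟩ := pow_unbounded_of_one_lt ((M + |a|) / |b|) hinv
    have hzn := (key (-(n : ℤ))).1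
    have e2 : ξ₂ ^ (-(n:ℤ)) = (ξ₂⁻¹) ^ n := by
      rw [zpow_neg, ← inv_zpow, zpow_natCast]
    rw [e2] at hzn
    have h2 : |a * ξ₁ ^ (-(n:ℤ))| ≤ |a| := by
      rw [abs_mul, abs_of_pos (zpow_pos hξ₁0 _)]
      nlinarith [abs_nonneg a, zpow_le_one_of_nonpos₀ (le_of_lt hξ₁1) (neg_nonpos.mpr (Int.natCast_nonneg n)),
        zpow_pos hξ₁0 (-(n:ℤ))]
    have h3 : |b| * (ξ₂⁻¹) ^ n ≤ M + |a| := by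
      have := hM (-(n : ℤ))
      rw [hzn] at this
      have h4 : |b * (ξ₂⁻¹) ^ n| - |a * ξ₁ ^ (-(n:ℤ))| ≤ |a * ξ₁ ^ (-(n:ℤ)) + b * (ξ₂⁻¹) ^ n| := by
        have := abs_sub (a * ξ₁ ^ (-(n:ℤ)) + b * (ξ₂⁻¹) ^ n) (a * ξ₁ ^ (-(n:ℤ)))
        simp only [add_sub_cancel_left] at this
        linarith
      rw [abs_mul, abs_of_pos (pow_pos (inv_pos.mpr hξ₂0) n)] at h4
      linarith
    rw [div_lt_iff₀ habs] at hn
    nlinarith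
  intro k
  rw [(key k).1, ha0, hb0]
  ring

lemma stmt7_estep (t : ℝ) (ht : t ≠ 0) (m : ℤ) : t ^ m = t ^ (m - 1) * t := by
  conv_lhs => rw [show m = (m-1)+1 by ring]
  rw [zpow_add_one₀ ht]

theorem stmt_7 (p₀ q₀ r₀ s₀ : ℝ) (N : ℕ) (i₀ : ℤ) (ξ₁ ξ₂ D : ℝ)
    (hp : 0 < p₀) (hq : 0 < q₀) (hs : 0 < s₀) (hr : 0 ≤ r₀)
    (hsum : p₀ + q₀ + r₀ + s₀ = 1) (hN : 1 < N) (hi₀ : 0 ≤ i₀) (hi₀N : i₀ < N)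
    (hξ₁ : q₀ * ξ₁ ^ 2 - (p₀ + q₀ + N * s₀) * ξ₁ + p₀ = 0) (hξ₁1 : ξ₁ > 1)
    (hξ₂ : q₀ * ξ₂ ^ 2 - (p₀ + q₀ + N * s₀) * ξ₂ + p₀ = 0) (hξ₂1 : ξ₂ < 1) (hξ₂0 : 0 < ξ₂)
    (hD : D = Real.sqrt ((p₀ + q₀ + N * s₀) ^ 2 - 4 * p₀ * q₀))
    (x : ℤ → ℝ)
    (hx : ∀ k : ℤ, x k = if k ≤ 0
      then ((i₀ * q₀ * ξ₂ / p₀) + N - i₀) * ξ₁ ^ k / D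
      else ((i₀ * q₀ * ξ₁ / p₀) + N - i₀) * ξ₂ ^ k / D) :
    ((∀ k : ℤ, q₀ * x (k + 1) - (p₀ + q₀ + N * s₀) * x k + p₀ * x (k - 1) =
        ((i₀ : ℝ) - N) * (if k = 0 then 1 else 0) - i₀ * (if k = 1 then 1 else 0)) ∧
      (∃ M : ℝ, ∀ k : ℤ, |x k| ≤ M)) ∧
    ∀ y : ℤ → ℝ,
      ((∀ k : ℤ, q₀ * y (k + 1) - (p₀ + q₀ + N * s₀) * y k + p₀ * y (k - 1) =
          ((i₀ : ℝ) - N) * (if k = 0 then 1 else 0) - i₀ * (if k = 1 then 1 else 0)) ∧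
        (∃ M : ℝ, ∀ k : ℤ, |y k| ≤ M)) → y = x := by
  have hξ₁0 : (0:ℝ) < ξ₁ := lt_trans one_pos hξ₁1
  have h1ne : ξ₁ ≠ 0 := ne_of_gt hξ₁0
  have h2ne : ξ₂ ≠ 0 := ne_of_gt hξ₂0
  have hsubpos : 0 < ξ₁ - ξ₂ := by linarith
  have hsub : ξ₁ - ξ₂ ≠ 0 := ne_of_gt hsubpos
  have hA : p₀ + q₀ + N * s₀ = q₀ * (ξ₁ + ξ₂) := by
    have h : ((p₀ + q₀ + N * s₀) - q₀ * (ξ₁ + ξ₂)) * (ξ₁ - ξ₂) = 0 := by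
      linear_combination hξ₂ - hξ₁
    rcases mul_eq_zero.mp h with h' | h'
    · linarith
    · exact absurd h' hsub
  have hP : p₀ = q₀ * ξ₁ * ξ₂ := by linear_combination hξ₁ + ξ₁ * hA
  have hDq : D = q₀ * (ξ₁ - ξ₂) := by
    rw [hD, show (p₀ + q₀ + N * s₀) ^ 2 - 4 * p₀ * q₀ = (q₀ * (ξ₁ - ξ₂)) ^ 2 by
      rw [hA, hP]; ring]
    exact Real.sqrt_sq (by positivity)
  have hD0 : 0 < D := by rw [hDq]; positivity
  have hDne : D ≠ 0 := ne_of_gt hD0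
  have hpne : p₀ ≠ 0 := ne_of_gt hp
  have hqne : q₀ ≠ 0 := ne_of_gt hq
  have hrecx : ∀ k : ℤ, q₀ * x (k + 1) - (p₀ + q₀ + N * s₀) * x k + p₀ * x (k - 1) =
      ((i₀ : ℝ) - N) * (if k = 0 then 1 else 0) - i₀ * (if k = 1 then 1 else 0) := by
    intro k
    rw [hx (k+1), hx k, hx (k-1)]
    rcases lt_trichotomy k 0 with hk | hk | hk
    · have h1 : k + 1 ≤ 0 := by omega
      have h2 : k ≤ 0 := by omega
      have h3 : k - 1 ≤ 0 := by omega
      have h4 : ¬ (k = 0) := by omega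
      have h5 : ¬ (k = 1) := by omega
      simp only [if_pos h1, if_pos h2, if_pos h3, if_neg h4, if_neg h5]
      rw [zpow_add_one₀ h1ne k, stmt7_estep ξ₁ h1ne k, hA, hP, hDq]
      field_simp
      ring
    · subst hk
      have h1 : ¬ ((0:ℤ) + 1 ≤ 0) := by norm_num
      have h2 : (0:ℤ) ≤ 0 := le_refl 0
      have h3 : (0:ℤ) - 1 ≤ 0 := by norm_num
      have h5 : ¬ ((0:ℤ) = 1) := by norm_num
      simp only [if_neg h1, if_pos h2, if_pos h3, if_pos rfl, if_neg h5, ↓reduceIte]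
      rw [show (0:ℤ) + 1 = 1 by ring, show (0:ℤ) - 1 = -1 by ring,
        zpow_one, zpow_zero, zpow_neg_one]
      rw [hA, hP, hDq]
      field_simp
      ring
    · rcases eq_or_lt_of_le (show (0:ℤ) + 1 ≤ k from hk) with hk1 | hk2
      · rw [← hk1]
        have h1 : ¬ ((0:ℤ) + 1 + 1 ≤ 0) := by norm_num
        have h2 : ¬ ((0:ℤ) + 1 ≤ 0) := by norm_num
        have h3 : (0:ℤ) + 1 - 1 ≤ 0 := by norm_num
        have h4 : ¬ ((0:ℤ) + 1 = 0) := by norm_num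
        simp only [if_neg h1, if_neg h2, if_pos h3, if_neg h4, if_pos rfl]
        rw [show (0:ℤ) + 1 + 1 = 1 + 1 by ring, zpow_add_one₀ h2ne 1,
          show (0:ℤ) + 1 = 1 by ring, show (1:ℤ) - 1 = 0 by ring, zpow_one, zpow_zero]
        rw [hA, hP, hDq]
        field_simp
        simp only [↓reduceIte]
        ring
      · have h1 : ¬ (k + 1 ≤ 0) := by omega
        have h2 : ¬ (k ≤ 0) := by omega
        have h3 : ¬ (k - 1 ≤ 0) := by omega
        have h4 : ¬ (k = 0) := by omega
        have h5 : ¬ (k = 1) := by omega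
        simp only [if_neg h1, if_neg h2, if_neg h3, if_neg h4, if_neg h5]
        rw [zpow_add_one₀ h2ne k, stmt7_estep ξ₂ h2ne k, hA, hP, hDq]
        field_simp
        ring
  set Mx : ℝ := (|(i₀:ℝ) * q₀ * ξ₂ / p₀ + N - i₀| + |(i₀:ℝ) * q₀ * ξ₁ / p₀ + N - i₀|) / D
    with hMx
  have hbx : ∀ k : ℤ, |x k| ≤ Mx := by
    intro k
    rw [hx k]
    split_ifs with h
    · rw [abs_div, abs_of_pos hD0, abs_mul, abs_of_pos (zpow_pos hξ₁0 k), hMx]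
      have h1 : ξ₁ ^ k ≤ 1 := zpow_le_one_of_nonpos₀ (le_of_lt hξ₁1) h
      rw [div_le_div_iff_of_pos_right hD0]
      have h2 := mul_le_mul_of_nonneg_left h1 (abs_nonneg ((i₀:ℝ) * q₀ * ξ₂ / p₀ + N - i₀))
      have h3 := abs_nonneg ((i₀:ℝ) * q₀ * ξ₁ / p₀ + N - i₀)
      rw [mul_one] at h2
      linarith
    · rw [abs_div, abs_of_pos hD0, abs_mul, abs_of_pos (zpow_pos hξ₂0 k), hMx]
      have h1 : ξ₂ ^ k ≤ 1 := zpow_le_one₀ hξ₂0 (le_of_lt hξ₂1) (by omega)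
      rw [div_le_div_iff_of_pos_right hD0]
      have h2 := mul_le_mul_of_nonneg_left h1 (abs_nonneg ((i₀:ℝ) * q₀ * ξ₁ / p₀ + N - i₀))
      have h3 := abs_nonneg ((i₀:ℝ) * q₀ * ξ₂ / p₀ + N - i₀)
      rw [mul_one] at h2
      linarith
  refine ⟨⟨hrecx, ⟨Mx, hbx⟩⟩, ?_⟩
  rintro y ⟨hry, My, hMy⟩
  have hzrec : ∀ j : ℤ, q₀ * (y (j+1) - x (j+1)) - (p₀ + q₀ + N * s₀) * (y j - x j)
      + p₀ * (y (j-1) - x (j-1)) = 0 := by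
    intro j
    linear_combination hry j - hrecx j
  have hzbnd : ∀ j : ℤ, |y j - x j| ≤ My + Mx :=
    fun j => le_trans (abs_sub (y j) (x j)) (add_le_add (hMy j) (hbx j))
  have hz := stmt7_aux q₀ p₀ ξ₁ ξ₂ (p₀ + q₀ + N * s₀) hq hp hξ₁1 hξ₂0 hξ₂1 hA hP
    (fun j => y j - x j) hzrec (My + Mx) hzbnd
  funext k
  have hk := hz k
  linarith
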